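/- The vector f satisfies ⟨f|f⟩ = 2/7, its multiple 7f belongs to L, but f itself does not belong to L. -/
import Mathlib


noncomputable section

/-- The bilinear form `⟨x|y⟩ = (1/8) ∑ i, x i * y i` on `ℚ^24`. -/
def B (x y : Fin 24 → ℚ) : ℚ := (1/8) * ∑ i, x i * y i

def v1 : Fin 24 → ℚ :=
  (1/7 : ℚ) • ![0,4,4,4,4,4,4,4, 0,4,4,4,4,4,4,4, 0,0,0,0,0,0,0,0]
def v2 : Fin 24 → ℚ :=
  (1/7 : ℚ) • ![0,0,0,0,0,0,0,0, 0,4,4,4,4,4,4,4, 0,4,4,4,4,4,4,4]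
def v3 : Fin 24 → ℚ :=
  (1/7 : ℚ) • ![0,4,4,4,4,4,4,4, 0,-4,-4,-4,-4,-4,-4,-4, 0,0,0,0,0,0,0,0]
def v4 : Fin 24 → ℚ :=
  (1/7 : ℚ) • ![-14,2,2,2,2,2,2,2, 0,0,0,0,0,0,0,0, 0,0,0,0,0,0,0,0]
def v5 : Fin 24 → ℚ :=
  (1/7 : ℚ) • ![0,0,0,0,0,0,0,0, -14,2,2,2,2,2,2,2, 0,0,0,0,0,0,0,0]
def v6 : Fin 24 → ℚ :=
  (1/7 : ℚ) • ![-7,1,1,1,1,1,1,1, -7,1,1,1,1,1,1,1, -7,-3,-3,-3,-3,-3,-3,-3]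

/-- `L` is the ℤ-span of `v1, …, v6` in `ℚ^24`. -/
def L : Submodule ℤ (Fin 24 → ℚ) :=
  Submodule.span ℤ {v1, v2, v3, v4, v5, v6}

def f : Fin 24 → ℚ :=
  (1/7 : ℚ) • ![5,1,1,1,1,1,1,1, 1,1,1,1,1,1,1,1, 3,3,3,3,3,3,3,3]

def β0 : Fin 24 → ℚ :=
  (1/7 : ℚ) • ![-9,-1,-1,-1,-1,-1,-1,-1, 1,1,1,1,1,1,1,1, 3,-1,-1,-1,-1,-1,-1,-1]
def β2 : Fin 24 → ℚ :=
  (1/7 : ℚ) • ![-2,-2,-2,-2,-2,-2,-2,-2, -6,-2,-2,-2,-2,-2,-2,-2, -4,0,0,0,0,0,0,0]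
def β3 : Fin 24 → ℚ :=
  (1/7 : ℚ) • ![-2,2,2,2,2,2,2,2, 8,0,0,0,0,0,0,0, -4,0,0,0,0,0,0,0]
def β4 : Fin 24 → ℚ :=
  (1/7 : ℚ) • ![5,-3,-3,-3,-3,-3,-3,-3, 1,1,1,1,1,1,1,1, 3,-1,-1,-1,-1,-1,-1,-1]
def β5 : Fin 24 → ℚ :=
  (1/7 : ℚ) • ![-2,2,2,2,2,2,2,2, -6,2,2,2,2,2,2,2, -4,0,0,0,0,0,0,0]
def β6 : Fin 24 → ℚ :=
  (1/7 : ℚ) • ![5,1,1,1,1,1,1,1, 1,-3,-3,-3,-3,-3,-3,-3, 3,-1,-1,-1,-1,-1,-1,-1]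

/-- `β i` for `i = 0, …, 6`, with `β 1 = f`. -/
def β : Fin 7 → (Fin 24 → ℚ) := ![β0, f, β2, β3, β4, β5, β6]

set_option maxHeartbeats 1000000 in
lemma aux_comb : (7 : ℚ) • f =
    (1:ℤ) • v1 + (3:ℤ) • v2 + (2:ℤ) • v3 + (-1:ℤ) • v4 + (1:ℤ) • v5 + (-3:ℤ) • v6 := by
  funext i
  fin_cases i <;> norm_num [f, v1, v2, v3, v4, v5, v6]

lemma aux_mem : (7 : ℚ) • f ∈ L := by
  rw [aux_comb]
  have h1 := Submodule.subset_span (R := ℤ) (s := {v1, v2, v3, v4, v5, v6}) (show v1 ∈ _ by simp)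
  have h2 := Submodule.subset_span (R := ℤ) (s := {v1, v2, v3, v4, v5, v6}) (show v2 ∈ _ by simp)
  have h3 := Submodule.subset_span (R := ℤ) (s := {v1, v2, v3, v4, v5, v6}) (show v3 ∈ _ by simp)
  have h4 := Submodule.subset_span (R := ℤ) (s := {v1, v2, v3, v4, v5, v6}) (show v4 ∈ _ by simp)
  have h5 := Submodule.subset_span (R := ℤ) (s := {v1, v2, v3, v4, v5, v6}) (show v5 ∈ _ by simp)
  have h6 := Submodule.subset_span (R := ℤ) (s := {v1, v2, v3, v4, v5, v6}) (show v6 ∈ _ by simp)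
  exact L.add_mem (L.add_mem (L.add_mem (L.add_mem (L.add_mem
    (L.smul_mem _ h1) (L.smul_mem _ h2)) (L.smul_mem _ h3))
    (L.smul_mem _ h4)) (L.smul_mem _ h5)) (L.smul_mem _ h6)

/-- evaluation at coordinate 0, as a ℤ-linear map -/
def π0 : (Fin 24 → ℚ) →ₗ[ℤ] ℚ :=
  ((LinearMap.proj (0 : Fin 24) : (Fin 24 → ℚ) →ₗ[ℚ] ℚ)).restrictScalars ℤ

lemma aux_not_mem : f ∉ L := by
  intro hf
  have hle : L ≤ Submodule.comap π0 (Submodule.span ℤ {(1:ℚ)}) := by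
    rw [L, Submodule.span_le]
    intro x hx
    simp only [Set.mem_insert_iff, Set.mem_singleton_iff] at hx
    rcases hx with h|h|h|h|h|h <;> subst h <;>
      rw [SetLike.mem_coe, Submodule.mem_comap, Submodule.mem_span_singleton]
    · exact ⟨0, by norm_num [π0, v1]⟩
    · exact ⟨0, by norm_num [π0, v2]⟩
    · exact ⟨0, by norm_num [π0, v3]⟩
    · exact ⟨-2, by norm_num [π0, v4]⟩
    · exact ⟨0, by norm_num [π0, v5]⟩
    · exact ⟨-1, by norm_num [π0, v6]⟩
  have := hle hf
  rw [Submodule.mem_comap, Submodule.mem_span_singleton] at this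
  obtain ⟨n, hn⟩ := this
  have hq : (n : ℚ) = 7⁻¹ * 5 := by simpa [π0, f] using hn
  have h7 : ((7 * n : ℤ) : ℚ) = 5 := by push_cast; linarith
  have : (7 * n : ℤ) = 5 := by exact_mod_cast h7
  omega

/-- `⟨f|f⟩ = 2/7`, `7f ∈ L`, but `f ∉ L`. -/
theorem stmt9 :
    B f f = 2/7 ∧ (7 : ℚ) • f ∈ L ∧ f ∉ L := by
  refine ⟨?_, aux_mem, aux_not_mem⟩
  simp [B, f, Fin.sum_univ_succ]
  norm_num
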